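/- arXiv:2104.04512 — 6 statements merged into one kernel-verified Lean document; each statement's English description precedes it below -/
import Mathlib

section
/- The key-value counter program is consistent: specifically, (C1) for an increment event i(k), adding 1 to key k of the pointwise sum of two maps equals the pointwise sum after adding 1 to key k of the first map; (C2) joining the two states produced by forking a counter map (where fork sends each key's count entirely to one of the two sides) recovers the original map; (C3) any two increment events (of any keys) commute as state updates, and an increment of key k1 commutes with a read-reset of key k2 whenever k1 ≠ k2, with the outputs produced (the read values) also agreeing. -/
namespace KV

/-- Events: increment `inc k` or read-reset `rr k`, for integer keys. -/
inductive Ev : Type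
  | inc (k : ℤ)
  | rr (k : ℤ)

/-- State: a map from keys to counters (default value 0). -/
def St : Type := ℤ → ℤ

/-- `update s (inc k)` increments `s k`; `update s (rr k)` resets `s k` to 0. -/
def update (s : St) : Ev → St
  | .inc k => Function.update s k (s k + 1)
  | .rr k => Function.update s k 0

/-- Output: an increment outputs nothing; a read-reset outputs the counter. -/
def out (s : St) : Ev → List ℤ
  | .inc _ => []
  | .rr k => [s k]

/-- `join` is the pointwise sum of the two counter maps. -/
def join (s1 s2 : St) : St := fun k => s1 k + s2 k

/-- `fork` sends each key's count entirely to the side responsible for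
read-resets of that key: side 1 if `pred1` accepts `rr k`, else side 2. -/
def fork (s : St) (pred1 _pred2 : Ev → Bool) : St × St :=
  (fun k => if pred1 (.rr k) then s k else 0,
   fun k => if pred1 (.rr k) then 0 else s k)

/-- **The key-value counter program is consistent**:
(C1) for increment events, join commutes with update (outputs agree trivially);
(C2) join ∘ fork = id;
(C3) any two increments commute, and an increment of `k1` commutes with a
read-reset of `k2` whenever `k1 ≠ k2`, with agreeing outputs. -/
theorem kv_consistent :
    (∀ (s1 s2 : St) (k : ℤ),
      join (update s1 (.inc k)) s2 = update (join s1 s2) (.inc k) ∧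
      out s1 (.inc k) = out (join s1 s2) (.inc k)) ∧
    (∀ (s : St) (pred1 pred2 : Ev → Bool),
      join (fork s pred1 pred2).1 (fork s pred1 pred2).2 = s) ∧
    (∀ (s : St) (k1 k2 : ℤ),
      update (update s (.inc k1)) (.inc k2) =
        update (update s (.inc k2)) (.inc k1) ∧
      out s (.inc k1) ++ out (update s (.inc k1)) (.inc k2) =
        out s (.inc k2) ++ out (update s (.inc k2)) (.inc k1)) ∧
    (∀ (s : St) (k1 k2 : ℤ), k1 ≠ k2 →
      update (update s (.inc k1)) (.rr k2) =
        update (update s (.rr k2)) (.inc k1) ∧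
      out s (.inc k1) ++ out (update s (.inc k1)) (.rr k2) =
        out s (.rr k2) ++ out (update s (.rr k2)) (.inc k1)) := by
  refine ⟨fun s1 s2 k => ⟨funext fun x => ?_, rfl⟩,
    fun s pred1 pred2 => funext fun k => ?_,
    fun s k1 k2 => ⟨funext fun x => ?_, rfl⟩,
    fun s k1 k2 h => ⟨funext fun x => ?_, ?_⟩⟩
  · simp only [update, join, Function.update]
    by_cases hx : x = k <;> simp [hx] <;> ring
  · simp only [join, fork]
    by_cases h : pred1 (.rr k) <;> simp [h]
  · simp only [update, Function.update]
    by_cases h1 : x = k1 <;> by_cases h2 : x = k2 <;>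
      simp [h1, h2] <;> subst_vars <;> simp_all
  · simp only [update, Function.update]
    by_cases h1 : x = k1 <;> by_cases h2 : x = k2 <;>
      simp [h1, h2] <;> subst_vars <;> simp_all
  · simp [out, update, Function.update, (Ne.symm h)]
end KV
end

section
/- If consistency condition C3 holds (independent events commute as updates with agreeing outputs), then for any state s, any event e independent of every element of a list u (with all events satisfying the relevant predicate), folding update over u ++ [e] from s yields the same final state as folding over [e] ++ u, and the multisets of concatenated outputs agree. -/
/-- Folding update over a list of events: final state. -/
def foldSt {State Event : Type*} (update : State → Event → State) :
    State → List Event → State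
  | s, [] => s
  | s, e :: u => foldSt update (update s e) u

/-- Folding update over a list of events: concatenated outputs. -/
def foldOut {State Event Out : Type*} (update : State → Event → State)
    (out : State → Event → List Out) : State → List Event → List Out
  | _, [] => []
  | s, e :: u => out s e ++ foldOut update out (update s e) u

/-- **Bubbling lemma**: under (C3), an event `e` that is independent of
every element of `u` (all events satisfying the relevant predicate) can be
moved from the end of `u` to the front, preserving the final state and
the multiset of concatenated outputs. -/
theorem bubble_independent_event {State Event Out : Type*}
    (update : State → Event → State) (out : State → Event → List Out)
    (indep : Event → Event → Prop)
    (hsymm : ∀ e1 e2, indep e1 e2 → indep e2 e1)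
    (pred : Event → Prop)
    (hC3 : ∀ (s : State) (e1 e2 : Event), indep e1 e2 → pred e1 → pred e2 →
      update (update s e1) e2 = update (update s e2) e1 ∧
      out s e1 ++ out (update s e1) e2 = out s e2 ++ out (update s e2) e1)
    (s : State) (e : Event) (u : List Event)
    (he : pred e) (hu : ∀ x ∈ u, pred x) (hind : ∀ x ∈ u, indep e x) :
    foldSt update s (u ++ [e]) = foldSt update s (e :: u) ∧
    (foldOut update out s (u ++ [e]) : Multiset Out) =
      (foldOut update out s (e :: u) : Multiset Out) := by

  induction u generalizing s with
  | nil => simp [foldSt, foldOut]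
  | cons x u' ih =>
    have hx : pred x := hu x (by simp)
    have hix : indep x e := hsymm e x (hind x (by simp))
    obtain ⟨hst, hout⟩ := hC3 s x e hix hx he
    have ihs := ih (update s x) (fun y hy => hu y (by simp [hy]))
      (fun y hy => hind y (by simp [hy]))
    constructor
    · show foldSt update (update s x) (u' ++ [e]) = _
      rw [ihs.1]
      show foldSt update (update (update s x) e) u' = foldSt update (update (update s e) x) u'
      rw [hst]
    · calc (foldOut update out s ((x::u')++[e]) : Multiset Out)
          = (out s x : Multiset Out) + foldOut update out (update s x) (u'++[e]) := by
            simp [foldOut]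
        _ = (out s x : Multiset Out) + foldOut update out (update s x) (e::u') := by rw [ihs.2]
        _ = (out s x : Multiset Out) + ((out (update s x) e : Multiset Out)
              + foldOut update out (update (update s x) e) u') := by simp [foldOut]
        _ = ((out s x ++ out (update s x) e : List Out) : Multiset Out)
              + foldOut update out (update (update s x) e) u' := by simp [add_assoc]
        _ = ((out s e ++ out (update s e) x : List Out) : Multiset Out)
              + foldOut update out (update (update s e) x) u' := by rw [hout, hst]
        _ = _ := by simp [foldOut, add_assoc]
end

section
/- Sequentialization of a parallel wire: if a DGS program satisfies C1 (for both components, by symmetry via a join commuting with updates on either side), C2 (join ∘ fork = id), and C3 (independent events commute), and a parallel composition wire (State,pred,s)=u/v=>(State,pred,s') is derived from sub-derivations on u1, u2 with outputs v1, v2 where the sub-derivations are already equivalent to sequential update-folds, then the final state s' equals fold update u' s for any interleaving u' of u1 and u2, and the multiset of v equals the multiset of outputs of that fold. -/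
/-- A DGS program: event and output types, finitely many state types
(indexed by `Ix`) each with a predicate on events, an initial state of
type `State i0` whose predicate is trivially true, per-state-type update
and output functions, a symmetric dependence relation on events, and
sets of fork and join parallelization primitives. -/
structure DGS where
  Event : Type
  Out : Type
  Ix : Type
  State : Ix → Type
  i0 : Ix
  pred : Ix → Event → Prop
  pred0 : ∀ e, pred i0 e
  init : State i0
  update : ∀ i, State i → Event → State i
  out : ∀ i, State i → Event → List Out
  depends : Event → Event → Prop
  depends_symm : ∀ e1 e2, depends e1 e2 → depends e2 e1
  ForkSet : ∀ i j k : Ix,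
    Set (State i → (Event → Prop) → (Event → Prop) → State j × State k)
  JoinSet : ∀ j k i : Ix, Set (State j → State k → State i)

namespace DGS

def indep (P : DGS) (e1 e2 : P.Event) : Prop := ¬ P.depends e1 e2

/-- `Inter l l1 l2` : the list `l` is an interleaving of `l1` and `l2`. -/
inductive Inter {α : Type*} : List α → List α → List α → Prop
  | nil : Inter [] [] []
  | left {a l l1 l2} : Inter l l1 l2 → Inter (a :: l) (a :: l1) l2
  | right {a l l1 l2} : Inter l l1 l2 → Inter (a :: l) l1 (a :: l2)

/-- The inductively defined DGS semantics on wires: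
`Sem P i pr s u s' v` means ⟨State_i, pr, s⟩ =u/v=> ⟨State_i, pr, s'⟩. -/
inductive Sem (P : DGS) :
    ∀ i : P.Ix, (P.Event → Prop) → P.State i → List P.Event →
      P.State i → List P.Out → Prop where
  | empty {i pr s} (hw : ∀ e, pr e → P.pred i e) :
      Sem P i pr s [] s []
  | single {i pr s e} (hw : ∀ e, pr e → P.pred i e) (he : pr e) :
      Sem P i pr s [e] (P.update i s e) (P.out i s e)
  | seq {i pr s s' s'' u u' v v'} :
      Sem P i pr s u s' v → Sem P i pr s' u' s'' v' →
      Sem P i pr s (u ++ u') s'' (v ++ v')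
  | par {i j k : P.Ix} {pr pred1 pred2 : P.Event → Prop} {s : P.State i}
      {s1' : P.State j} {s2' : P.State k}
      {u u1 u2 : List P.Event} {v v1 v2 : List P.Out}
      {fork : P.State i → (P.Event → Prop) → (P.Event → Prop) → P.State j × P.State k}
      {join : P.State j → P.State k → P.State i}
      (hfork : fork ∈ P.ForkSet i j k) (hjoin : join ∈ P.JoinSet j k i)
      (hind : ∀ e1 e2, pred1 e1 → pred2 e2 → P.indep e1 e2)
      (h1 : ∀ e, pred1 e → pr e) (h2 : ∀ e, pred2 e → pr e)
      (hw1 : ∀ e, pred1 e → P.pred j e) (hw2 : ∀ e, pred2 e → P.pred k e)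
      (hu : Inter u u1 u2) (hv : Inter v v1 v2)
      (d1 : Sem P j pred1 (fork s pred1 pred2).1 u1 s1' v1)
      (d2 : Sem P k pred2 (fork s pred1 pred2).2 u2 s2' v2) :
      Sem P i pr s u (join s1' s2') v

/-- Folding the update function over an input list: final state. -/
def foldSt (P : DGS) (i : P.Ix) : P.State i → List P.Event → P.State i
  | s, [] => s
  | s, e :: u => P.foldSt i (P.update i s e) u

/-- Folding the update function over an input list: concatenated outputs. -/
def foldOut (P : DGS) (i : P.Ix) : P.State i → List P.Event → List P.Out
  | _, [] => []
  | s, e :: u => P.out i s e ++ P.foldOut i (P.update i s e) u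


/-- (C1), left version: a join commutes with updates on the left
component, with equal outputs. -/
def C1L (P : DGS) : Prop :=
  ∀ (j k i : P.Ix) (join : P.State j → P.State k → P.State i),
    join ∈ P.JoinSet j k i →
    ∀ (e : P.Event), P.pred i e → P.pred j e →
    ∀ (s1 : P.State j) (s2 : P.State k),
      join (P.update j s1 e) s2 = P.update i (join s1 s2) e ∧
      P.out j s1 e = P.out i (join s1 s2) e

/-- (C1), right version (by symmetry): a join commutes with updates on
the right component, with equal outputs. -/
def C1R (P : DGS) : Prop :=
  ∀ (j k i : P.Ix) (join : P.State j → P.State k → P.State i),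
    join ∈ P.JoinSet j k i →
    ∀ (e : P.Event), P.pred i e → P.pred k e →
    ∀ (s1 : P.State j) (s2 : P.State k),
      join s1 (P.update k s2 e) = P.update i (join s1 s2) e ∧
      P.out k s2 e = P.out i (join s1 s2) e

/-- (C2): join ∘ fork = id. -/
def C2 (P : DGS) : Prop :=
  ∀ (i j k : P.Ix)
    (fork : P.State i → (P.Event → Prop) → (P.Event → Prop) → P.State j × P.State k),
    fork ∈ P.ForkSet i j k →
    ∀ (join : P.State j → P.State k → P.State i), join ∈ P.JoinSet j k i →
    ∀ (s : P.State i) (pred1 pred2 : P.Event → Prop),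
      join (fork s pred1 pred2).1 (fork s pred1 pred2).2 = s

/-- (C3): independent events commute, with agreeing outputs. -/
def C3 (P : DGS) : Prop :=
  ∀ (i : P.Ix) (s : P.State i) (e1 e2 : P.Event),
    P.indep e1 e2 → P.pred i e1 → P.pred i e2 →
      P.update i (P.update i s e1) e2 = P.update i (P.update i s e2) e1 ∧
      P.out i s e1 ++ P.out i (P.update i s e1) e2 =
        P.out i s e2 ++ P.out i (P.update i s e2) e1

lemma Inter.mem {α : Type*} {l l1 l2 : List α} (h : Inter l l1 l2) :
    ∀ a ∈ l, a ∈ l1 ∨ a ∈ l2 := by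
  induction h with
  | nil => simp
  | left _ ih =>
    intro a ha
    rcases List.mem_cons.1 ha with rfl | ha
    · exact Or.inl (List.mem_cons_self)
    · rcases ih a ha with h | h
      · exact Or.inl (List.mem_cons_of_mem _ h)
      · exact Or.inr h
  | right _ ih =>
    intro a ha
    rcases List.mem_cons.1 ha with rfl | ha
    · exact Or.inr (List.mem_cons_self)
    · rcases ih a ha with h | h
      · exact Or.inl h
      · exact Or.inr (List.mem_cons_of_mem _ h)

lemma Inter.multiset {α : Type*} {l l1 l2 : List α} (h : Inter l l1 l2) :
    (l : Multiset α) = (l1 : Multiset α) + (l2 : Multiset α) := by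
  induction h with
  | nil => simp
  | left _ ih => simp only [← Multiset.cons_coe, ih, Multiset.cons_add]
  | right _ ih => simp only [← Multiset.cons_coe, ih, Multiset.add_cons]

lemma Sem.mem_pred {P : DGS} {i pr s u s' v} (d : Sem P i pr s u s' v) :
    ∀ e ∈ u, pr e := by
  induction d with
  | empty _ => simp
  | single _ he =>
    intro e' he'
    rcases List.mem_singleton.1 he' with rfl
    exact he
  | seq _ _ ih1 ih2 =>
    intro e he
    rcases List.mem_append.1 he with h | h
    · exact ih1 e h
    · exact ih2 e h
  | par _ _ _ h1 h2 _ _ hu _ _ _ ih1 ih2 =>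
    intro e he
    rcases hu.mem e he with h | h
    · exact h1 e (ih1 e h)
    · exact h2 e (ih2 e h)

lemma join_fold {P : DGS} (hC1 : P.C1L) (hC1r : P.C1R)
    {j k i : P.Ix} {join : P.State j → P.State k → P.State i}
    (hjoin : join ∈ P.JoinSet j k i) :
    ∀ {u' u1 u2 : List P.Event}, Inter u' u1 u2 →
    ∀ (t1 : P.State j) (t2 : P.State k),
    (∀ e ∈ u1, P.pred i e ∧ P.pred j e) →
    (∀ e ∈ u2, P.pred i e ∧ P.pred k e) →
    join (P.foldSt j t1 u1) (P.foldSt k t2 u2) = P.foldSt i (join t1 t2) u' ∧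
    ((P.foldOut i (join t1 t2) u' : Multiset P.Out) =
      (P.foldOut j t1 u1 : Multiset P.Out) + (P.foldOut k t2 u2 : Multiset P.Out)) := by
  intro u' u1 u2 h
  induction h with
  | nil => intro t1 t2 _ _; simp [DGS.foldSt, DGS.foldOut]
  | @left a l l1 l2 _ ih =>
    intro t1 t2 hu1 hu2
    have ha := hu1 a (List.mem_cons_self)
    obtain ⟨hst, hout⟩ := hC1 j k i join hjoin a ha.1 ha.2 t1 t2
    have := ih (P.update j t1 a) t2 (fun e he => hu1 e (List.mem_cons_of_mem _ he)) hu2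
    constructor
    · simpa [DGS.foldSt, hst] using this.1
    · simp only [DGS.foldOut, ← Multiset.coe_add]
      rw [← hst, ← hout, this.2, add_assoc]
  | @right a l l1 l2 _ ih =>
    intro t1 t2 hu1 hu2
    have ha := hu2 a (List.mem_cons_self)
    obtain ⟨hst, hout⟩ := hC1r j k i join hjoin a ha.1 ha.2 t1 t2
    have := ih t1 (P.update k t2 a) hu1 (fun e he => hu2 e (List.mem_cons_of_mem _ he))
    constructor
    · simpa [DGS.foldSt, hst] using this.1
    · simp only [DGS.foldOut, ← Multiset.coe_add]
      rw [← hst, ← hout, this.2, add_left_comm]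

/-- **Sequentialization of a parallel wire** (the parallel inductive step
of "consistency implies determinism"): under C1 (both sides), C2 and C3,
if the two sub-derivations of a parallel composition are already
equivalent to sequential folds, then the final state of the parallel wire
equals the fold of updates over any interleaving `u'` of `u1` and `u2`,
and the multiset of outputs `v` equals the multiset of outputs of that fold. -/
theorem parallel_wire_sequentialization (P : DGS)
    (hC1 : P.C1L) (hC1r : P.C1R) (hC2 : P.C2) (hC3 : P.C3)
    {i j k : P.Ix} {pr pred1 pred2 : P.Event → Prop} {s : P.State i}
    {s1' : P.State j} {s2' : P.State k}
    {u u1 u2 : List P.Event} {v v1 v2 : List P.Out}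
    {fork : P.State i → (P.Event → Prop) → (P.Event → Prop) → P.State j × P.State k}
    {join : P.State j → P.State k → P.State i}
    (hfork : fork ∈ P.ForkSet i j k) (hjoin : join ∈ P.JoinSet j k i)
    (hind : ∀ e1 e2, pred1 e1 → pred2 e2 → P.indep e1 e2)
    (h1 : ∀ e, pred1 e → pr e) (h2 : ∀ e, pred2 e → pr e)
    (hw : ∀ e, pr e → P.pred i e)
    (hw1 : ∀ e, pred1 e → P.pred j e) (hw2 : ∀ e, pred2 e → P.pred k e)
    (hu : Inter u u1 u2) (hv : Inter v v1 v2)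
    (d1 : Sem P j pred1 (fork s pred1 pred2).1 u1 s1' v1)
    (d2 : Sem P k pred2 (fork s pred1 pred2).2 u2 s2' v2)
    (ih1 : s1' = P.foldSt j (fork s pred1 pred2).1 u1 ∧
           v1 = P.foldOut j (fork s pred1 pred2).1 u1)
    (ih2 : s2' = P.foldSt k (fork s pred1 pred2).2 u2 ∧
           v2 = P.foldOut k (fork s pred1 pred2).2 u2) :
    ∀ u' : List P.Event, Inter u' u1 u2 →
      join s1' s2' = P.foldSt i s u' ∧
      (v : Multiset P.Out) = (P.foldOut i s u' : Multiset P.Out) := by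
  intro u' hu'
  obtain ⟨hs1, hv1⟩ := ih1
  obtain ⟨hs2, hv2⟩ := ih2
  have hp1 : ∀ e ∈ u1, P.pred i e ∧ P.pred j e := fun e he =>
    ⟨hw e (h1 e (d1.mem_pred e he)), hw1 e (d1.mem_pred e he)⟩
  have hp2 : ∀ e ∈ u2, P.pred i e ∧ P.pred k e := fun e he =>
    ⟨hw e (h2 e (d2.mem_pred e he)), hw2 e (d2.mem_pred e he)⟩
  have key := join_fold hC1 hC1r hjoin hu' (fork s pred1 pred2).1 (fork s pred1 pred2).2 hp1 hp2
  rw [hC2 i j k fork hfork join hjoin s pred1 pred2] at key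
  refine ⟨by rw [hs1, hs2, key.1], ?_⟩
  rw [key.2, hv.multiset, hv1, hv2]

end DGS
end

section
/- A dependence-preserving reordering preserves the subsequence of events of any fixed tag: if m ∈ reorder_D(u), where reorder_D is the set of permutations of the list u that preserve the relative order of every pair of D-dependent events, and the dependence relation D relates every pair of events with the same tag, then for each tag σ, filtering m to events of tag σ yields exactly the same list as filtering u to events of tag σ. -/
/-- `reorderD D u m` : `m` is a dependence-preserving reordering of `u`,
i.e. there is a position bijection between `u` and `m` preserving elements
and preserving the relative order of every `D`-related pair of occurrences. -/
def reorderD {α : Type*} (D : α → α → Prop) (u m : List α) : Prop :=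
  ∃ f : Fin u.length ≃ Fin m.length,
    (∀ i : Fin u.length, m.get (f i) = u.get i) ∧
    ∀ i j : Fin u.length, (i : ℕ) < (j : ℕ) → D (u.get i) (u.get j) →
      ((f i : ℕ) < (f j : ℕ))

lemma filter_eq_map_filter_finRange {α : Type*} (l : List α) (p : α → Bool) :
    l.filter p = ((List.finRange l.length).filter (fun i => p (l.get i))).map l.get := by
  conv_lhs => rw [← List.map_get_finRange l]
  rw [List.filter_map]
  rfl

/-- A dependence-preserving reordering preserves the subsequence of events
of any fixed tag, provided events with equal tags are always dependent. -/
theorem reorder_preserves_tag_subsequence {α Tag : Type*} [DecidableEq Tag]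
    (tag : α → Tag) (D : α → α → Prop)
    (hD : ∀ e1 e2, tag e1 = tag e2 → D e1 e2)
    (u m : List α) (h : reorderD D u m) :
    ∀ σ : Tag, m.filter (fun e => tag e = σ) = u.filter (fun e => tag e = σ) := by
  intro σ
  obtain ⟨f, hget, hord⟩ := h
  have hu := filter_eq_map_filter_finRange u (fun e => tag e = σ)
  have hm := filter_eq_map_filter_finRange m (fun e => tag e = σ)
  rw [hu, hm]
  have key : (List.finRange m.length).filter (fun j => decide (tag (m.get j) = σ))
      = ((List.finRange u.length).filter (fun i => decide (tag (u.get i) = σ))).map f := by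
    refine (fun hp h1 h2 => List.Perm.eq_of_pairwise' (r := ((· < ·) : Fin m.length → Fin m.length → Prop)) h1 h2 hp) ?_ ?_ ?_
    · rw [List.perm_ext_iff_of_nodup
        ((List.nodup_finRange _).filter _)
        (((List.nodup_finRange _).filter _).map f.injective)]
      intro j
      simp only [List.mem_filter, List.mem_finRange, true_and, List.mem_map,
        decide_eq_true_eq]
      constructor
      · intro hj
        refine ⟨f.symm j, ?_, by simp⟩
        rw [← f.apply_symm_apply j] at hj
        rwa [hget (f.symm j)] at hj
      · rintro ⟨i, hi, rfl⟩
        rwa [hget i]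
    · exact List.Pairwise.filter _ (List.pairwise_lt_finRange _)
    · refine List.pairwise_map.mpr
        (List.Pairwise.imp_of_mem ?_ (List.Pairwise.filter _ (List.pairwise_lt_finRange _)))
      intro i j hi hj hij
      simp only [List.mem_filter, decide_eq_true_eq] at hi hj
      exact hord i j hij (hD _ _ (hi.2.trans hj.2.symm))
  rw [key, List.map_map]
  exact List.map_congr_left (fun i _ => hget i)
end

section
/- Any dependence-preserving reordering of u produces the same result under a sequential fold of updates, up to output multiset, provided condition C3 holds: if m ∈ reorder_D(u), where ¬D(e1,e2) implies that update-applications of e1 and e2 commute with agreeing concatenated outputs (C3), then fold update m init = fold update u init and the output multisets are equal. -/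
lemma collapse_lt {k a b : ℕ} (ha : a ≠ k) (hb : b ≠ k) (hab : a < b) :
    (if a < k then a else a - 1) < (if b < k then b else b - 1) := by
  split_ifs <;> omega

lemma bubble {State Event Out : Type*} (update : State → Event → State)
    (out : State → Event → List Out) (D : Event → Event → Prop)
    (hC3 : ∀ (s : State) (e1 e2 : Event), ¬ D e1 e2 →
      update (update s e1) e2 = update (update s e2) e1 ∧
      out s e1 ++ out (update s e1) e2 = out s e2 ++ out (update s e2) e1) :
    ∀ (l : List Event) (s : State) (e : Event) (r : List Event),
      (∀ x ∈ l, ¬ D x e) →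
      foldSt update s (l ++ e :: r) = foldSt update (update s e) (l ++ r) ∧
      foldOut update out s (l ++ e :: r)
        = out s e ++ foldOut update out (update s e) (l ++ r) := by
  intro l
  induction l with
  | nil => intro s e r _; simp [foldSt, foldOut]
  | cons x l ih =>
    intro s e r hind
    have hx : ¬ D x e := hind x (by simp)
    have hl : ∀ y ∈ l, ¬ D y e := fun y hy => hind y (by simp [hy])
    obtain ⟨hst, hout⟩ := ih (update s x) e r hl
    obtain ⟨hc1, hc2⟩ := hC3 s x e hx
    constructor
    · show foldSt update (update s x) (l ++ e :: r)
        = foldSt update (update (update s e) x) (l ++ r)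
      rw [hst, hc1]
    · show out s x ++ foldOut update out (update s x) (l ++ e :: r)
        = out s e ++ (out (update s e) x
          ++ foldOut update out (update (update s e) x) (l ++ r))
      rw [hout, ← List.append_assoc, hc2, List.append_assoc, hc1]

/-- Under (C3) — updates of `D`-independent events commute with agreeing
concatenated outputs — any dependence-preserving reordering of the input
yields the same final state under the sequential fold, and the same
multiset of outputs. -/
theorem reorder_fold_invariant {State Event Out : Type*}
    (update : State → Event → State) (out : State → Event → List Out)
    (init : State) (D : Event → Event → Prop)
    (hsymm : ∀ e1 e2, D e1 e2 → D e2 e1)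
    (hC3 : ∀ (s : State) (e1 e2 : Event), ¬ D e1 e2 →
      update (update s e1) e2 = update (update s e2) e1 ∧
      out s e1 ++ out (update s e1) e2 = out s e2 ++ out (update s e2) e1)
    (u m : List Event) (h : reorderD D u m) :
    foldSt update init m = foldSt update init u ∧
    (foldOut update out init m : Multiset Out) =
      (foldOut update out init u : Multiset Out) := by
  induction u generalizing m init with
  | nil =>
    obtain ⟨f, -, -⟩ := h
    have hlen : m.length = 0 := (Fin.equiv_iff_eq.mp ⟨f.symm⟩)
    rw [List.length_eq_zero_iff.mp hlen]
    exact ⟨rfl, rfl⟩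
  | cons e u' ih =>
    obtain ⟨f, hget, hord⟩ := h
    set n := u'.length with hn
    have hlen : m.length = n + 1 := (Fin.equiv_iff_eq.mp ⟨f.symm⟩)
    set z : Fin (e :: u').length := ⟨0, Nat.succ_pos _⟩ with hz
    set k : ℕ := (f z : ℕ) with hk
    have hkm : k < m.length := (f z).isLt
    -- m = take k ++ e :: drop (k+1)
    have hme : m.get (f z) = e := hget z
    have hsplit : m = m.take k ++ e :: m.drop (k + 1) := by
      rw [← hme]
      show m = m.take k ++ m[k] :: m.drop (k + 1)
      rw [List.getElem_cons_drop, List.take_append_drop]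
    set l : List Event := m.take k with hldef
    set r : List Event := m.drop (k + 1) with hrdef
    have hllen : l.length = k := by
      simp [hldef, Nat.min_eq_left (le_of_lt hkm)]
    have hrlen : r.length = m.length - (k + 1) := by simp [hrdef]
    have hlrlen : (l ++ r).length = n := by
      simp only [List.length_append, hllen, hrlen]; omega
    -- elements of l are independent of e
    have hindep : ∀ x ∈ l, ¬ D x e := by
      intro x hx hD
      obtain ⟨p, hp, hxp⟩ := List.mem_iff_getElem.mp hx
      have hpk : p < k := by rwa [hllen] at hp
      have hpm : p < m.length := hpk.trans hkm
      set i : Fin (e :: u').length := f.symm ⟨p, hpm⟩ with hi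
      have hfi : (f i : ℕ) = p := by simp [hi]
      have hiz : i ≠ z := by
        intro hcon
        rw [hcon] at hfi
        omega
      have hipos : 0 < (i : ℕ) :=
        Nat.pos_of_ne_zero (fun h1 => hiz (Fin.ext h1))
      have hxval : x = (e :: u').get i := by
        rw [← hget i, ← hxp]
        simp only [hldef, List.getElem_take, List.get_eq_getElem]
        congr 1
        exact hfi.symm
      have hDe : D ((e :: u').get z) ((e :: u').get i) := by
        have : (e :: u').get z = e := rfl
        rw [this, ← hxval]
        exact hsymm _ _ hD
      have := hord z i hipos hDe
      omega
    obtain ⟨hst, hout⟩ := bubble update out D hC3 l init e r hindep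
    rw [← hsplit] at hst hout
    -- construct the restricted bijection
    have hne : ∀ j : Fin n, (f j.succ : ℕ) ≠ k := by
      intro j hcon
      have : f j.succ = f z := Fin.ext hcon
      have := f.injective this
      simp [hz, Fin.ext_iff] at this
    have gval_lt : ∀ j : Fin n,
        (if (f j.succ : ℕ) < k then (f j.succ : ℕ) else (f j.succ : ℕ) - 1) < n := by
      intro j
      have h1 := (f j.succ).isLt
      have h2 := hne j
      split_ifs <;> omega
    set g : Fin n → Fin n := fun j =>
      ⟨if (f j.succ : ℕ) < k then (f j.succ : ℕ) else (f j.succ : ℕ) - 1,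
        gval_lt j⟩ with hg
    have ginj : Function.Injective g := by
      intro a b hab
      rcases lt_trichotomy ((f a.succ : ℕ)) ((f b.succ : ℕ)) with h1 | h1 | h1
      · have := collapse_lt (hne a) (hne b) h1
        simp [hg, Fin.ext_iff] at hab
        omega
      · have := f.injective (Fin.ext h1)
        exact Fin.succ_injective _ this
      · have := collapse_lt (hne b) (hne a) h1
        simp [hg, Fin.ext_iff] at hab
        omega
    have gbij : Function.Bijective g := (Finite.injective_iff_bijective).mp ginj
    set g' : Fin u'.length ≃ Fin (l ++ r).length :=
      (Equiv.ofBijective g gbij).trans (finCongr hlrlen.symm) with hg'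
    have hg'val : ∀ j : Fin u'.length, (g' j : ℕ) =
        (if (f j.succ : ℕ) < k then (f j.succ : ℕ) else (f j.succ : ℕ) - 1) := by
      intro j; simp [hg', hg]
    -- g' preserves elements
    have hget' : ∀ j : Fin u'.length, (l ++ r).get (g' j) = u'.get j := by
      intro j
      have hju : u'.get j = (e :: u').get j.succ := by simp
      rw [hju, ← hget j.succ]
      have hjv := hg'val j
      rcases lt_or_ge ((f j.succ : ℕ)) k with hc | hc
      · have hgv : (g' j : ℕ) = (f j.succ : ℕ) := by rw [hjv, if_pos hc]
        have hlt : (g' j : ℕ) < l.length := by omega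
        rw [List.get_eq_getElem, List.get_eq_getElem,
          List.getElem_append_left hlt]
        simp only [hldef, List.getElem_take, List.get_eq_getElem]
        congr 1
      · have hgt : k < (f j.succ : ℕ) := lt_of_le_of_ne hc (Ne.symm (hne j))
        have hgv : (g' j : ℕ) = (f j.succ : ℕ) - 1 := by
          rw [hjv, if_neg (by omega)]
        have hge : l.length ≤ (g' j : ℕ) := by omega
        rw [List.get_eq_getElem, List.get_eq_getElem,
          List.getElem_append_right hge]
        simp only [hrdef, List.getElem_drop]
        congr 1
        omega
    -- g' preserves order of D-related pairs
    have hord' : ∀ i j : Fin u'.length, (i : ℕ) < (j : ℕ) →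
        D (u'.get i) (u'.get j) → ((g' i : ℕ) < (g' j : ℕ)) := by
      intro i j hij hD
      have hD' : D ((e :: u').get i.succ) ((e :: u').get j.succ) := by
        simpa using hD
      have hf := hord i.succ j.succ (by simpa using hij) hD'
      rw [hg'val i, hg'val j]
      exact collapse_lt (hne i) (hne j) hf
    obtain ⟨ihst, ihout⟩ := ih (update init e) (l ++ r) ⟨g', hget', hord'⟩
    constructor
    · rw [hst, ihst]; rfl
    · rw [hout]
      have : foldOut update out init (e :: u')
          = out init e ++ foldOut update out (update init e) u' := rfl
      rw [this]
      show (↑(out init e) + (foldOut update out (update init e) (l ++ r) : Multiset Out))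
        = ↑(out init e) + (foldOut update out (update init e) u' : Multiset Out)
      rw [ihout]
end

section
/- If m is a dependence-preserving reordering of u and u' is a prefix of u consisting of events that are pairwise dependent with all their successors in u (i.e., the first |u'| events are D-dependent on every later event), then u' is also a prefix of m. -/
/-- If `m` is a dependence-preserving reordering of `u` and `u'` is a
prefix of `u` whose events are `D`-dependent on every later event of `u`,
then `u'` is also a prefix of `m`. -/
theorem reorder_preserves_dependent_prefix {α : Type*}
    (D : α → α → Prop) (u u' m : List α)
    (h : reorderD D u m) (hpre : u' <+: u)
    (hdep : ∀ i j : Fin u.length, (i : ℕ) < u'.length → (i : ℕ) < (j : ℕ) →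
      D (u.get i) (u.get j)) :
    u' <+: m := by
  obtain ⟨f, hget, hord⟩ := h
  have hlen : u.length = m.length := by
    simpa using Fintype.card_congr f
  have hle : u'.length ≤ u.length := hpre.length_le
  -- key claim : f fixes all positions < u'.length
  have key : ∀ i : ℕ, ∀ hi : i < u.length, i < u'.length →
      ((f ⟨i, hi⟩ : ℕ) = i) := by
    intro i
    induction i using Nat.strong_induction_on with
    | _ i ih =>
      intro hi hi'
      rcases lt_trichotomy ((f ⟨i, hi⟩ : ℕ)) i with hc | hc | hc
      · -- c < i : contradiction with injectivity
        exfalso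
        set c : ℕ := (f ⟨i, hi⟩ : ℕ) with hcdef
        have hcu : c < u.length := lt_trans hc hi
        have : (f ⟨c, hcu⟩ : ℕ) = c := ih c hc hcu (lt_trans hc hi')
        have heq : f ⟨c, hcu⟩ = f ⟨i, hi⟩ := by
          apply Fin.ext
          exact this.trans hcdef
        have := f.injective heq
        have : c = i := congrArg Fin.val this
        omega
      · exact hc
      · -- c > i : consider preimage of i
        exfalso
        have him : i < m.length := hlen ▸ hi
        set k : Fin u.length := f.symm ⟨i, him⟩ with hkdef
        have hfk : (f k : ℕ) = i := by simp [hkdef]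
        rcases lt_trichotomy (k : ℕ) i with hk | hk | hk
        · have := ih k hk k.isLt (lt_trans hk hi')
          rw [Fin.eta] at this
          omega
        · have : k = ⟨i, hi⟩ := Fin.ext hk
          rw [this] at hfk
          omega
        · have := hord ⟨i, hi⟩ k hk (hdep ⟨i, hi⟩ k hi' hk)
          omega
  have hlen' : u'.length ≤ m.length := hle.trans (le_of_eq hlen)
  rw [List.prefix_iff_eq_take]
  apply List.ext_getElem
  · simp [Nat.min_eq_left hlen']
  · intro n h1 h2
    have hnu : n < u.length := lt_of_lt_of_le h1 hle
    have : m.get (f ⟨n, hnu⟩) = u.get ⟨n, hnu⟩ := hget ⟨n, hnu⟩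
    have hfn : (f ⟨n, hnu⟩ : ℕ) = n := key n hnu h1
    have hm : m[n]'(hlen ▸ hnu) = u[n]'hnu := by
      have := hget ⟨n, hnu⟩
      simp only [List.get_eq_getElem] at this
      rw [← this]
      congr 1
      exact hfn.symm
    have hu : u[n]'hnu = u'[n]'h1 := (List.IsPrefix.getElem hpre h1).symm
    simp [hu, hm]
end
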